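/- For finite random variables (U,V) with n-fold iid copies, any ε ∈ (0,1), and any γ < I[U;V], for all sufficiently large n: (1/n) I₀^ε[Uⁿ;Vⁿ] ≥ γ. -/

import Mathlib

open Finset

/-- The n-fold iid product of a joint pmf `p` on `U × V`. -/
noncomputable def iidJoint {U V : Type*} (p : U × V → ℝ) (n : ℕ) :
    (Fin n → U) × (Fin n → V) → ℝ :=
  fun x => ∏ i, p (x.1 i, x.2 i)

/-- The classical smooth min Rényi divergence `I₀^ε`: the supremum over sets
`𝒜` with `p(𝒜) ≥ 1 - ε` of `-log₂ ∑_{(u,v)∈𝒜} p_U(u) p_V(v)` (with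
`p_U, p_V` the marginals of `p`). -/
noncomputable def IminSmooth {U V : Type*} [Fintype U] [Fintype V]
    (p : U × V → ℝ) (ε : ℝ) : ℝ :=
  sSup {x : ℝ | ∃ A : Finset (U × V),
    1 - ε ≤ ∑ y ∈ A, p y ∧
    x = - Real.logb 2 (∑ y ∈ A, (∑ v, p (y.1, v)) * (∑ u, p (u, y.2)))}

lemma myAux_sum_prod {α : Type*} [Fintype α] {n : ℕ} (F : Fin n → α → ℝ) :
    ∑ f : Fin n → α, ∏ i, F i (f i) = ∏ i, ∑ a, F i a := (Fintype.prod_sum F).symm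

lemma myAux_mean {α : Type*} [Fintype α] (w h : α → ℝ) (hw : ∑ a, w a = 1) {n : ℕ}
    (i : Fin n) :
    ∑ f : Fin n → α, (∏ j, w (f j)) * h (f i) = ∑ a, w a * h a := by
  have key : ∀ f : Fin n → α,
      (∏ j, w (f j)) * h (f i) = ∏ j, (w (f j) * if j = i then h (f j) else 1) := by
    intro f
    rw [Finset.prod_mul_distrib, Finset.prod_ite_eq' univ i (fun j => h (f j))]
    simp
  rw [Finset.sum_congr rfl (fun f _ => key f),
    myAux_sum_prod (fun j a => w a * if j = i then h a else 1)]
  have : ∀ j : Fin n, (∑ a, w a * if j = i then h a else 1)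
      = if j = i then (∑ a, w a * h a) else 1 := by
    intro j; split <;> simp [hw]
  rw [Finset.prod_congr rfl (fun j _ => this j), Finset.prod_ite_eq' univ i
    (fun _ => ∑ a, w a * h a)]
  simp

lemma myAux_cov {α : Type*} [Fintype α] (w h : α → ℝ) (hw : ∑ a, w a = 1)
    (hμ : ∑ a, w a * h a = 0) {n : ℕ} (i k : Fin n) :
    ∑ f : Fin n → α, (∏ j, w (f j)) * (h (f i) * h (f k))
      = if i = k then ∑ a, w a * h a ^ 2 else 0 := by
  by_cases hik : i = k
  · subst hik
    simp only [if_pos rfl]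
    have := myAux_mean w (fun a => h a ^ 2) hw i
    simpa [sq] using this
  · simp only [if_neg hik]
    have key : ∀ f : Fin n → α,
        (∏ j, w (f j)) * (h (f i) * h (f k))
          = ∏ j, (w (f j) * (if j = i then h (f j) else 1) * (if j = k then h (f j) else 1)) := by
      intro f
      rw [Finset.prod_mul_distrib, Finset.prod_mul_distrib,
        Finset.prod_ite_eq' univ i (fun j => h (f j)),
        Finset.prod_ite_eq' univ k (fun j => h (f j))]
      simp [mul_assoc]
    rw [Finset.sum_congr rfl (fun f _ => key f),
      myAux_sum_prod (fun j a => w a * (if j = i then h a else 1) * (if j = k then h a else 1))]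
    apply Finset.prod_eq_zero (Finset.mem_univ i)
    simp [hik, hμ]

lemma myAux_var {α : Type*} [Fintype α] (w h : α → ℝ) (hw : ∑ a, w a = 1)
    (hμ : ∑ a, w a * h a = 0) (n : ℕ) :
    ∑ f : Fin n → α, (∏ j, w (f j)) * (∑ i, h (f i)) ^ 2
      = n * ∑ a, w a * h a ^ 2 := by
  have expand : ∀ f : Fin n → α,
      (∏ j, w (f j)) * (∑ i, h (f i)) ^ 2
        = ∑ i, ∑ k, (∏ j, w (f j)) * (h (f i) * h (f k)) := by
    intro f
    rw [sq, Finset.sum_mul_sum]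
    rw [Finset.mul_sum]
    exact Finset.sum_congr rfl fun i _ => by rw [Finset.mul_sum]
  rw [Finset.sum_congr rfl (fun f _ => expand f), Finset.sum_comm]
  have key : ∀ i : Fin n, ∑ f : Fin n → α, ∑ k : Fin n, (∏ j, w (f j)) * (h (f i) * h (f k))
      = ∑ a, w a * h a ^ 2 := by
    intro i
    rw [Finset.sum_comm]
    calc ∑ k : Fin n, ∑ f : Fin n → α, (∏ j, w (f j)) * (h (f i) * h (f k))
        = ∑ k : Fin n, if i = k then ∑ a, w a * h a ^ 2 else 0 :=
          Finset.sum_congr rfl fun k _ => myAux_cov w h hw hμ i k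
      _ = ∑ a, w a * h a ^ 2 := by simp
  rw [Finset.sum_congr rfl (fun i _ => key i)]
  simp [mul_comm]

lemma myAux_mass {α : Type*} [Fintype α] (w : α → ℝ) (hw : ∑ a, w a = 1) (n : ℕ) :
    ∑ f : Fin n → α, ∏ j, w (f j) = 1 := by
  rw [myAux_sum_prod (fun _ => w)]
  simp [hw]

lemma myAux_cheb {α : Type*} [Fintype α] (w g : α → ℝ) (hw0 : ∀ a, 0 ≤ w a)
    (hw : ∑ a, w a = 1) {t : ℝ} (ht : t < ∑ a, w a * g a) {n : ℕ} (hn : 0 < n)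
    [DecidablePred fun f : Fin n → α => (∑ i, g (f i)) ≤ n * t] :
    ∑ f ∈ univ.filter (fun f : Fin n → α => (∑ i, g (f i)) ≤ n * t), ∏ j, w (f j)
      ≤ (∑ a, w a * (g a - ∑ b, w b * g b) ^ 2) / (n * ((∑ a, w a * g a) - t) ^ 2) := by
  set μ := ∑ a, w a * g a with hμdef
  set δ := μ - t with hδdef
  have hδ : 0 < δ := by simp [hδdef]; linarith
  set h : α → ℝ := fun a => g a - μ with hhdef
  have hμ0 : ∑ a, w a * h a = 0 := by
    simp only [hhdef, mul_sub]
    rw [Finset.sum_sub_distrib, ← Finset.sum_mul, hw]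
    simp [hμdef]
  have hwprod : ∀ f : Fin n → α, 0 ≤ ∏ j, w (f j) := fun f =>
    Finset.prod_nonneg fun j _ => hw0 (f j)
  have hnR : (0:ℝ) < n := by exact_mod_cast hn
  -- key pointwise bound on the bad set
  have hpt : ∀ f ∈ univ.filter (fun f : Fin n → α => (∑ i, g (f i)) ≤ n * t),
      ∏ j, w (f j) ≤ (∏ j, w (f j)) * (∑ i, h (f i)) ^ 2 / (n * δ) ^ 2 := by
    intro f hf
    have hf' : (∑ i, g (f i)) ≤ n * t := (Finset.mem_filter.mp hf).2
    have hsum : (∑ i, h (f i)) = (∑ i, g (f i)) - n * μ := by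
      simp [hhdef, Finset.sum_sub_distrib, mul_comm]
    have h1 : (∑ i, h (f i)) ≤ -(n * δ) := by
      rw [hsum]; simp [hδdef]; nlinarith
    have h1' : (n:ℝ) * δ ≤ -(∑ i, h (f i)) := by linarith
    have h2 : (n * δ) ^ 2 ≤ (∑ i, h (f i)) ^ 2 := by
      have h4 := pow_le_pow_left₀ (by positivity) h1' 2
      calc (↑n * δ) ^ 2 ≤ (-(∑ i, h (f i))) ^ 2 := h4
        _ = (∑ i, h (f i)) ^ 2 := neg_sq _
    have h3 : (0:ℝ) < (n * δ) ^ 2 := by positivity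
    rw [le_div_iff₀ h3]
    exact le_trans (by nlinarith [hwprod f]) (mul_le_mul_of_nonneg_left h2 (hwprod f))
  calc ∑ f ∈ univ.filter (fun f : Fin n → α => (∑ i, g (f i)) ≤ n * t), ∏ j, w (f j)
      ≤ ∑ f ∈ univ.filter (fun f : Fin n → α => (∑ i, g (f i)) ≤ n * t),
          (∏ j, w (f j)) * (∑ i, h (f i)) ^ 2 / (n * δ) ^ 2 := Finset.sum_le_sum hpt
    _ ≤ ∑ f : Fin n → α, (∏ j, w (f j)) * (∑ i, h (f i)) ^ 2 / (n * δ) ^ 2 := by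
        apply Finset.sum_le_sum_of_subset_of_nonneg (Finset.filter_subset _ _)
        intro f _ _
        exact div_nonneg (mul_nonneg (hwprod f) (sq_nonneg _)) (sq_nonneg _)
    _ = (n * ∑ a, w a * h a ^ 2) / (n * δ) ^ 2 := by
        rw [← Finset.sum_div, myAux_var w h hw hμ0 n]
    _ = (∑ a, w a * h a ^ 2) / (n * δ ^ 2) := by
        field_simp

/-- Eventual lower bound on the normalized classical smooth min Rényi
divergence of iid copies: for any `ε ∈ (0,1)` and any `γ` less than the
Shannon mutual information `I[U;V]`, for all sufficiently large `n`,
`(1/n) I₀^ε[Uⁿ;Vⁿ] ≥ γ`. -/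
theorem smooth_min_renyi_div_iid_eventually_ge
    {U V : Type*} [Fintype U] [Fintype V]
    (p : U × V → ℝ) (hp0 : ∀ x, 0 ≤ p x) (hp1 : ∑ x, p x = 1)
    (ε γ : ℝ) (hε0 : 0 < ε) (hε1 : ε < 1)
    (hγ : γ < ∑ x : U × V, p x *
      Real.logb 2 (p x / ((∑ v, p (x.1, v)) * (∑ u, p (u, x.2))))) :
    ∀ᶠ n : ℕ in Filter.atTop, γ ≤ IminSmooth (iidJoint p n) ε / n := by
  classical
  set qU : U → ℝ := fun u => ∑ v, p (u, v) with hqU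
  set qV : V → ℝ := fun v => ∑ u, p (u, v) with hqV
  set g : U × V → ℝ := fun a => Real.logb 2 (p a / (qU a.1 * qV a.2)) with hg
  set μ : ℝ := ∑ a, p a * g a with hμ
  have hγμ : γ < μ := hγ
  set γ' : ℝ := (γ + μ) / 2 with hγ'
  have hγγ' : γ ≤ γ' := by rw [hγ']; linarith
  have hγ'μ : γ' < μ := by rw [hγ']; linarith
  set δ : ℝ := μ - γ' with hδ
  have hδ0 : 0 < δ := by rw [hδ]; linarith
  set Var : ℝ := ∑ a, p a * (g a - μ) ^ 2 with hVar
  obtain ⟨N₀, hN₀⟩ := exists_nat_ge (Var / (δ ^ 2 * ε))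
  rw [Filter.eventually_atTop]
  refine ⟨max N₀ 1, fun n hn => ?_⟩
  have hn1 : 1 ≤ n := le_trans (le_max_right _ _) hn
  have hnN₀ : (N₀ : ℝ) ≤ n := by exact_mod_cast le_trans (le_max_left _ _) hn
  have hnpos : 0 < n := hn1
  have hnR : (0 : ℝ) < n := by exact_mod_cast hnpos
  -- transfer between the two sample spaces
  have etrans : ∀ φ : (Fin n → U × V) → ℝ,
      ∑ x : (Fin n → U) × (Fin n → V), φ (fun i => (x.1 i, x.2 i))
        = ∑ f : Fin n → U × V, φ f := by
    intro φ
    exact Fintype.sum_bijective _ (Equiv.arrowProdEquivProdArrow (Fin n) (fun _ => U) (fun _ => V)).symm.bijective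
      _ _ (fun x => rfl)
  set P : (Fin n → U) × (Fin n → V) → ℝ := iidJoint p n with hP
  have hP0 : ∀ x, 0 ≤ P x := fun x => Finset.prod_nonneg fun i _ => hp0 _
  have hPtot : ∑ x, P x = 1 := by
    rw [hP]
    show ∑ x : (Fin n → U) × (Fin n → V), ∏ i, p (x.1 i, x.2 i) = 1
    rw [etrans (fun f => ∏ i, p (f i))]
    exact myAux_mass p hp1 n
  set A : Finset ((Fin n → U) × (Fin n → V)) :=
    univ.filter (fun x => 0 < P x ∧ (n : ℝ) * γ' ≤ ∑ i, g (x.1 i, x.2 i)) with hA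
  -- Fact 1: A has probability at least 1 - ε
  have fact1 : 1 - ε ≤ ∑ y ∈ A, P y := by
    have step_a : ∑ y ∈ A, P y
        = ∑ y ∈ univ.filter (fun x => (n : ℝ) * γ' ≤ ∑ i, g (x.1 i, x.2 i)), P y := by
      apply Finset.sum_subset
      · intro x hx
        simp only [hA, Finset.mem_filter] at hx ⊢
        exact ⟨hx.1, hx.2.2⟩
      · intro x hx hxA
        have hQ : (n : ℝ) * γ' ≤ ∑ i, g (x.1 i, x.2 i) := (Finset.mem_filter.mp hx).2
        by_contra hne
        have hpos : 0 < P x := lt_of_le_of_ne (hP0 x) (Ne.symm hne)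
        exact hxA (Finset.mem_filter.mpr ⟨Finset.mem_univ x, hpos, hQ⟩)
    have step_b : ∑ y ∈ univ.filter (fun x => (n : ℝ) * γ' ≤ ∑ i, g (x.1 i, x.2 i)), P y
        = 1 - ∑ y ∈ univ.filter (fun x => ¬ ((n : ℝ) * γ' ≤ ∑ i, g (x.1 i, x.2 i))), P y := by
      have := Finset.sum_filter_add_sum_filter_not univ
        (fun x => (n : ℝ) * γ' ≤ ∑ i, g (x.1 i, x.2 i)) P
      rw [hPtot] at this
      linarith
    have step_c : ∑ y ∈ univ.filter (fun x => ¬ ((n : ℝ) * γ' ≤ ∑ i, g (x.1 i, x.2 i))), P y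
        ≤ ε := by
      have sub1 : ∑ y ∈ univ.filter (fun x => ¬ ((n : ℝ) * γ' ≤ ∑ i, g (x.1 i, x.2 i))), P y
          ≤ ∑ y ∈ univ.filter (fun x => (∑ i, g (x.1 i, x.2 i)) ≤ (n : ℝ) * γ'), P y := by
        apply Finset.sum_le_sum_of_subset_of_nonneg
        · intro x hx
          simp only [Finset.mem_filter] at hx ⊢
          exact ⟨hx.1, le_of_not_ge hx.2⟩
        · exact fun y _ _ => hP0 y
      have sub2 : ∑ y ∈ univ.filter (fun x => (∑ i, g (x.1 i, x.2 i)) ≤ (n : ℝ) * γ'), P y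
          = ∑ f ∈ univ.filter (fun f : Fin n → U × V => (∑ i, g (f i)) ≤ (n : ℝ) * γ'),
              ∏ j, p (f j) := by
        rw [Finset.sum_filter, Finset.sum_filter]
        exact etrans (fun f => if (∑ i, g (f i)) ≤ (n : ℝ) * γ' then ∏ j, p (f j) else 0)
      have sub3 := myAux_cheb p g hp0 hp1 hγ'μ hnpos
      have hVarnonneg : 0 ≤ Var := Finset.sum_nonneg fun a _ =>
        mul_nonneg (hp0 a) (sq_nonneg _)
      have sub4 : Var / ((n : ℝ) * δ ^ 2) ≤ ε := by
        rw [div_le_iff₀ (by positivity)]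
        have h5 : Var ≤ (N₀ : ℝ) * (δ ^ 2 * ε) := by
          rw [div_le_iff₀ (by positivity)] at hN₀
          linarith
        have h6 : (N₀ : ℝ) * (δ ^ 2 * ε) ≤ (n : ℝ) * (δ ^ 2 * ε) := by
          apply mul_le_mul_of_nonneg_right hnN₀ (by positivity)
        nlinarith
      calc ∑ y ∈ univ.filter (fun x => ¬ ((n : ℝ) * γ' ≤ ∑ i, g (x.1 i, x.2 i))), P y
          ≤ ∑ f ∈ univ.filter (fun f : Fin n → U × V => (∑ i, g (f i)) ≤ (n : ℝ) * γ'),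
              ∏ j, p (f j) := by rw [← sub2]; exact sub1
        _ ≤ Var / ((n : ℝ) * δ ^ 2) := by
            have := sub3
            simp only [← hμ, ← hVar, ← hδ] at this
            exact this
        _ ≤ ε := sub4
    rw [step_a, step_b]
    linarith
  -- marginal factorizations
  have margU : ∀ yu : Fin n → U, (∑ v : Fin n → V, P (yu, v)) = ∏ i, qU (yu i) := by
    intro yu
    exact myAux_sum_prod (fun i b => p (yu i, b))
  have margV : ∀ yv : Fin n → V, (∑ u : Fin n → U, P (u, yv)) = ∏ i, qV (yv i) := by
    intro yv
    exact myAux_sum_prod (fun i a => p (a, yv i))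
  set Sval : ℝ := ∑ y ∈ A, (∑ v, P (y.1, v)) * (∑ u, P (u, y.2)) with hSval
  have term_nonneg : ∀ y : (Fin n → U) × (Fin n → V),
      0 ≤ (∑ v, P (y.1, v)) * (∑ u, P (u, y.2)) := fun y =>
    mul_nonneg (Finset.sum_nonneg fun v _ => hP0 _) (Finset.sum_nonneg fun u _ => hP0 _)
  have term_pos : ∀ y : (Fin n → U) × (Fin n → V), 0 < P y →
      0 < (∑ v, P (y.1, v)) * (∑ u, P (u, y.2)) := by
    intro y hy
    apply mul_pos
    · refine lt_of_lt_of_le hy ?_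
      have := Finset.single_le_sum (f := fun v => P (y.1, v))
        (fun v _ => hP0 _) (Finset.mem_univ y.2)
      simpa using this
    · refine lt_of_lt_of_le hy ?_
      have := Finset.single_le_sum (f := fun u => P (u, y.2))
        (fun u _ => hP0 _) (Finset.mem_univ y.1)
      simpa using this
  -- pointwise bound on A
  have pointwise : ∀ y ∈ A, (∑ v, P (y.1, v)) * (∑ u, P (u, y.2))
      ≤ (2 : ℝ) ^ (-((n : ℝ) * γ')) * P y := by
    intro y hy
    rw [hA, Finset.mem_filter] at hy
    obtain ⟨-, hPy, hSy⟩ := hy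
    have hpi : ∀ i, 0 < p (y.1 i, y.2 i) := by
      intro i
      rcases (hp0 (y.1 i, y.2 i)).lt_or_eq with h | h
      · exact h
      · exfalso
        have : P y = 0 := Finset.prod_eq_zero (Finset.mem_univ i) h.symm
        rw [this] at hPy; exact lt_irrefl 0 hPy
    have key : ∀ i, qU (y.1 i) * qV (y.2 i)
        = p (y.1 i, y.2 i) * (2 : ℝ) ^ (-(g (y.1 i, y.2 i))) := by
      intro i
      have hqUi : 0 < qU (y.1 i) := lt_of_lt_of_le (hpi i)
        (Finset.single_le_sum (f := fun b => p (y.1 i, b))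
          (fun b _ => hp0 _) (Finset.mem_univ (y.2 i)))
      have hqVi : 0 < qV (y.2 i) := lt_of_lt_of_le (hpi i)
        (Finset.single_le_sum (f := fun a => p (a, y.2 i))
          (fun a _ => hp0 _) (Finset.mem_univ (y.1 i)))
      have hr : 0 < p (y.1 i, y.2 i) / (qU (y.1 i) * qV (y.2 i)) :=
        div_pos (hpi i) (mul_pos hqUi hqVi)
      have h2 : (2 : ℝ) ^ (g (y.1 i, y.2 i)) = p (y.1 i, y.2 i) / (qU (y.1 i) * qV (y.2 i)) :=
        Real.rpow_logb (by norm_num) (by norm_num) hr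
      have h2pos : (0 : ℝ) < (2 : ℝ) ^ (g (y.1 i, y.2 i)) :=
        Real.rpow_pos_of_pos (by norm_num) _
      rw [Real.rpow_neg (by norm_num : (0:ℝ) ≤ 2)]
      rw [h2] at h2pos ⊢
      field_simp
      rw [div_self (hpi i).ne']
    have prodeq : (∑ v, P (y.1, v)) * (∑ u, P (u, y.2))
        = P y * (2 : ℝ) ^ (-(∑ i, g (y.1 i, y.2 i))) := by
      rw [margU, margV, ← Finset.prod_mul_distrib]
      rw [Finset.prod_congr rfl (fun i _ => key i), Finset.prod_mul_distrib]
      rw [← Real.rpow_sum_of_pos (by norm_num : (0:ℝ) < 2), ← Finset.sum_neg_distrib]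
      rfl
    rw [prodeq]
    rw [mul_comm ((2:ℝ) ^ (-((n : ℝ) * γ'))) (P y)]
    apply mul_le_mul_of_nonneg_left _ (hP0 y)
    apply Real.rpow_le_rpow_of_exponent_le (by norm_num : (1:ℝ) ≤ 2)
    linarith
  -- sum bound
  have fact2 : Sval ≤ (2 : ℝ) ^ (-((n : ℝ) * γ')) := by
    have hApb : ∑ y ∈ A, P y ≤ 1 := by
      rw [← hPtot]
      exact Finset.sum_le_sum_of_subset_of_nonneg (Finset.subset_univ A)
        (fun y _ _ => hP0 y)
    calc Sval ≤ ∑ y ∈ A, (2 : ℝ) ^ (-((n : ℝ) * γ')) * P y := Finset.sum_le_sum pointwise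
      _ = (2 : ℝ) ^ (-((n : ℝ) * γ')) * ∑ y ∈ A, P y := by rw [Finset.mul_sum]
      _ ≤ (2 : ℝ) ^ (-((n : ℝ) * γ')) * 1 := by
          apply mul_le_mul_of_nonneg_left hApb (le_of_lt (Real.rpow_pos_of_pos two_pos _))
      _ = (2 : ℝ) ^ (-((n : ℝ) * γ')) := mul_one _
  -- positivity of Sval
  have fact3 : 0 < Sval := by
    have hAne : A.Nonempty := by
      rw [Finset.nonempty_iff_ne_empty]
      intro hAe
      rw [hAe] at fact1
      simp at fact1
      linarith
    obtain ⟨y₀, hy₀⟩ := hAne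
    have hy₀P : 0 < P y₀ := ((Finset.mem_filter.mp hy₀).2).1
    exact Finset.sum_pos' (fun y _ => term_nonneg y) ⟨y₀, hy₀, term_pos y₀ hy₀P⟩
  -- lower bound on -logb of Sval
  have fact5 : (n : ℝ) * γ' ≤ - Real.logb 2 Sval := by
    have : Real.logb 2 Sval ≤ Real.logb 2 ((2 : ℝ) ^ (-((n : ℝ) * γ'))) :=
      Real.logb_le_logb_of_le one_lt_two fact3 fact2
    rw [Real.logb_rpow (by norm_num) (by norm_num)] at this
    linarith
  -- bounded above
  set 𝒮 : Set ℝ := {x : ℝ | ∃ B : Finset ((Fin n → U) × (Fin n → V)),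
    1 - ε ≤ ∑ y ∈ B, P y ∧
    x = - Real.logb 2 (∑ y ∈ B, (∑ v, P (y.1, v)) * (∑ u, P (u, y.2)))} with h𝒮
  have exwit : ∀ B : Finset ((Fin n → U) × (Fin n → V)), 1 - ε ≤ ∑ y ∈ B, P y →
      ∃ y ∈ B, 0 < P y := by
    intro B hB
    by_contra hcon
    push_neg at hcon
    have : ∑ y ∈ B, P y = 0 :=
      Finset.sum_eq_zero fun y hy => le_antisymm (hcon y hy) (hP0 y)
    rw [this] at hB
    linarith
  have hbdd : BddAbove 𝒮 := by
    have hT : (univ.filter (fun y : (Fin n → U) × (Fin n → V) => 0 < P y)).Nonempty := by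
      by_contra hTe
      rw [Finset.not_nonempty_iff_eq_empty] at hTe
      have : ∑ y : (Fin n → U) × (Fin n → V), P y = 0 := by
        apply Finset.sum_eq_zero
        intro y _
        by_contra hy
        have : y ∈ univ.filter (fun y : (Fin n → U) × (Fin n → V) => 0 < P y) :=
          Finset.mem_filter.mpr ⟨Finset.mem_univ y, lt_of_le_of_ne (hP0 y) (Ne.symm hy)⟩
        rw [hTe] at this
        exact absurd this (Finset.notMem_empty y)
      rw [hPtot] at this
      norm_num at this
    obtain ⟨y₀, hy₀T, hy₀min⟩ := Finset.exists_min_image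
      (univ.filter (fun y : (Fin n → U) × (Fin n → V) => 0 < P y))
      (fun y => (∑ v, P (y.1, v)) * (∑ u, P (u, y.2))) hT
    have hc : 0 < (∑ v, P (y₀.1, v)) * (∑ u, P (u, y₀.2)) :=
      term_pos y₀ (Finset.mem_filter.mp hy₀T).2
    refine ⟨- Real.logb 2 ((∑ v, P (y₀.1, v)) * (∑ u, P (u, y₀.2))), ?_⟩
    rintro x ⟨B, hB1, rfl⟩
    obtain ⟨y, hyB, hyP⟩ := exwit B hB1
    have hterm : (∑ v, P (y₀.1, v)) * (∑ u, P (u, y₀.2))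
        ≤ ∑ z ∈ B, (∑ v, P (z.1, v)) * (∑ u, P (u, z.2)) := by
      refine le_trans (hy₀min y (Finset.mem_filter.mpr ⟨Finset.mem_univ y, hyP⟩)) ?_
      exact Finset.single_le_sum (fun z _ => term_nonneg z) hyB
    have := Real.logb_le_logb_of_le one_lt_two hc hterm
    linarith
  have hmem : - Real.logb 2 Sval ∈ 𝒮 := ⟨A, fact1, rfl⟩
  have hle : - Real.logb 2 Sval ≤ sSup 𝒮 := le_csSup hbdd hmem
  have hI : IminSmooth (iidJoint p n) ε = sSup 𝒮 := rfl
  rw [hI, le_div_iff₀ hnR]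
  have : γ * n ≤ (n : ℝ) * γ' := by
    rw [mul_comm]
    exact mul_le_mul_of_nonneg_left hγγ' (le_of_lt hnR)
  linarith
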